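/- An element α ∈ T(X,Y,Z) is idempotent (α ∘ α = α) if and only if α(X) ⊆ Z ∪ (X \ Y) and α(t) = t for all t ∈ α(X). -/
import Mathlib

/-- α ∈ T(X,Y,Z) is idempotent iff α(X) ⊆ Z ∪ (X \ Y) and α fixes its range. -/
theorem stmt_8 {X : Type*} (Y Z : Set X) (hZY : Z ⊆ Y) (hZ : Z.Nonempty)
    (α : X → X) (hα : α '' Y ⊆ Z) :
    α ∘ α = α ↔ (Set.range α ⊆ Z ∪ Yᶜ ∧ ∀ t ∈ Set.range α, α t = t) := by
  constructor
  · intro h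
    have hfix : ∀ t ∈ Set.range α, α t = t := by
      rintro t ⟨x, rfl⟩
      exact congrFun h x
    refine ⟨?_, hfix⟩
    rintro t ⟨x, rfl⟩
    by_cases hy : α x ∈ Y
    · left
      have := hα ⟨α x, hy, rfl⟩
      rwa [hfix _ ⟨x, rfl⟩] at this
    · right; exact hy
  · rintro ⟨_, hfix⟩
    funext x
    exact hfix _ ⟨x, rfl⟩
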